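/- Let θ ∈ ℝ, η > 0, and g ≤ 0 be real numbers, and set θ' := θ + η·g. Then σ(θ') − σ(θ) ≥ 2·η·g·σ(θ). -/
import Mathlib


/-- Two-action softmax probability with antisymmetric logits `(θ, -θ)`. -/
noncomputable def twoActionSoftmax (θ : ℝ) : ℝ :=
  Real.exp θ / (Real.exp θ + Real.exp (-θ))

/-- **One-step softmax change, nonpositive gradient:** for `η > 0`, `g ≤ 0` and
`θ' = θ + η g`, one has `σ(θ') − σ(θ) ≥ 2 η g σ(θ)`. -/
theorem twoActionSoftmax_step_lower_bound_of_nonpos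
    (θ η g : ℝ) (hη : 0 < η) (hg : g ≤ 0) :
    2 * η * g * twoActionSoftmax θ ≤
      twoActionSoftmax (θ + η * g) - twoActionSoftmax θ := by
  unfold twoActionSoftmax
  set t := η * g with ht
  have ht0 : t ≤ 0 := mul_nonpos_of_nonneg_of_nonpos hη.le hg
  have h1 : Real.exp (θ + t) = Real.exp θ * Real.exp t := Real.exp_add θ t
  have h2 : Real.exp (-(θ + t)) = Real.exp (-θ) * Real.exp (-t) := by
    rw [← Real.exp_add]; ring_nf
  have h3 : Real.exp t * Real.exp (-t) = 1 := by
    rw [← Real.exp_add]; simp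
  have h4 : Real.exp θ * Real.exp (-θ) = 1 := by
    rw [← Real.exp_add]; simp
  have key : 2 * t + 1 ≤ Real.exp (2 * t) := Real.add_one_le_exp (2 * t)
  have e2t : Real.exp (2 * t) = Real.exp t * Real.exp t := by
    rw [← Real.exp_add]; ring_nf
  have p1 : 0 < Real.exp θ := Real.exp_pos θ
  have p2 : 0 < Real.exp (-θ) := Real.exp_pos _
  have p3 : 0 < Real.exp t := Real.exp_pos t
  have p4 : 0 < Real.exp (-t) := Real.exp_pos _
  rw [h1, h2]
  rw [div_sub_div _ _ (by positivity) (by positivity), ← mul_div_assoc,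
    div_le_div_iff₀ (by positivity) (by positivity)]
  have k2 : 0 ≤ Real.exp (-t) * (Real.exp (2*t) - 1 - 2*t) := by nlinarith
  rw [e2t] at k2
  have h5 : Real.exp (-t) * Real.exp t = 1 := by rw [← Real.exp_add]; simp
  have h6 : Real.exp (-t) * Real.exp t * Real.exp t = Real.exp t := by rw [h5, one_mul]
  have k3 : 0 ≤ Real.exp t - Real.exp (-t) - 2*t*Real.exp (-t) := by nlinarith [k2, h6]
  have h7 : Real.exp θ * Real.exp (-θ) * Real.exp (-t) = Real.exp (-t) := by rw [h4, one_mul]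
  have main : 2 * t * Real.exp θ * (Real.exp θ * Real.exp t + Real.exp (-θ) * Real.exp (-t)) ≤
      Real.exp t - Real.exp (-t) := by
    nlinarith [k3, h7, mul_nonneg (mul_nonneg (by linarith : (0:ℝ) ≤ -(2*t)) p3.le)
      (mul_pos p1 p1).le]
  have hS : (0:ℝ) ≤ Real.exp θ + Real.exp (-θ) := by positivity
  have main2 := mul_le_mul_of_nonneg_right main hS
  have hEq : Real.exp θ * Real.exp t * (Real.exp θ + Real.exp (-θ)) -
      (Real.exp θ * Real.exp t + Real.exp (-θ) * Real.exp (-t)) * Real.exp θ =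
      Real.exp t - Real.exp (-t) := by
    linear_combination (Real.exp t - Real.exp (-t)) * h4
  rw [hEq, ht] at *
  nlinarith [main2]
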